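/- arXiv:1909.03359 — 2 statements merged into one kernel-verified Lean document; each statement's English description precedes it below -/
import Mathlib

section
/- Let g1, ..., gk be vectors in ℝ^n such that the iterated Gradient Combiner GC(g1, ..., gk) = GC(gk, GC(g1, ..., g_{k-1})) is well-defined (each intermediate second argument is nonzero in the recursive application). Then ‖GC(g1, ..., gk)‖² ≤ Σ_{j=1}^{k} ‖gj‖². -/
open scoped RealInnerProductSpace

noncomputable def GC {E : Type*} [NormedAddCommGroup E] [InnerProductSpace ℝ E] (a b : E) : E :=
  b + a - ((⟪b, a⟫ : ℝ) / ‖b‖ ^ 2) • b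

noncomputable def gcAcc {E : Type*} [NormedAddCommGroup E] [InnerProductSpace ℝ E]
    (g : ℕ → E) : ℕ → E
  | 0 => g 0
  | j + 1 => GC (g (j + 1)) (gcAcc g j)

lemma GC_norm_sq_le {E : Type*} [NormedAddCommGroup E] [InnerProductSpace ℝ E]
    (a b : E) (hb : b ≠ 0) : ‖GC a b‖ ^ 2 ≤ ‖a‖ ^ 2 + ‖b‖ ^ 2 := by
  have hbn : ‖b‖ ≠ 0 := norm_ne_zero_iff.mpr hb
  set t : ℝ := (⟪b, a⟫ : ℝ) / ‖b‖ ^ 2 with ht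
  have hGC : GC a b = b + (a - t • b) := by
    rw [GC]; abel
  have horth : ⟪b, a - t • b⟫ = (0 : ℝ) := by
    rw [inner_sub_right, inner_smul_right, real_inner_self_eq_norm_sq, ht]
    field_simp; ring
  have hsum : ‖GC a b‖ ^ 2 = ‖b‖ ^ 2 + ‖a - t • b‖ ^ 2 := by
    rw [hGC, norm_add_sq_real, horth]; ring
  have hle : ‖a - t • b‖ ^ 2 ≤ ‖a‖ ^ 2 := by
    rw [norm_sub_sq_real, real_inner_smul_right, norm_smul, Real.norm_eq_abs,
      real_inner_comm b a]
    have : (|t| * ‖b‖) ^ 2 = t ^ 2 * ‖b‖ ^ 2 := by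
      rw [mul_pow, sq_abs]
    rw [this, ht]
    have hb2 : (0:ℝ) < ‖b‖ ^ 2 := by positivity
    rw [div_pow]
    have key : ((⟪b, a⟫:ℝ) ^ 2 / (‖b‖ ^ 2) ^ 2) * ‖b‖ ^ 2 = (⟪b, a⟫:ℝ) ^ 2 / ‖b‖ ^ 2 := by
      field_simp
    rw [key]
    have h2 : 2 * ((⟪b, a⟫:ℝ) / ‖b‖ ^ 2 * ⟪b, a⟫) = 2 * ((⟪b, a⟫:ℝ) ^ 2 / ‖b‖ ^ 2) := by
      ring
    rw [h2]
    have hnn : (0:ℝ) ≤ (⟪b, a⟫:ℝ) ^ 2 / ‖b‖ ^ 2 := by positivity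
    linarith
  linarith

theorem stmt13 {n : ℕ} (k : ℕ) (g : ℕ → EuclideanSpace ℝ (Fin n))
    (h : ∀ j < k, gcAcc g j ≠ 0) :
    ‖gcAcc g k‖ ^ 2 ≤ ∑ j ∈ Finset.range (k + 1), ‖g j‖ ^ 2 := by
  induction k with
  | zero => simp [gcAcc]
  | succ k ih =>
      have hk : gcAcc g k ≠ 0 := h k (Nat.lt_succ_self k)
      have ih' := ih (fun j hj => h j (hj.trans (Nat.lt_succ_self k)))
      have hstep := GC_norm_sq_le (g (k + 1)) (gcAcc g k) hk
      rw [Finset.sum_range_succ]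
      calc ‖gcAcc g (k + 1)‖ ^ 2 = ‖GC (g (k + 1)) (gcAcc g k)‖ ^ 2 := rfl
        _ ≤ ‖g (k + 1)‖ ^ 2 + ‖gcAcc g k‖ ^ 2 := hstep
        _ ≤ _ := by linarith
end

section
/- Let G = {a1, ..., aN} be a finite nonempty set of nonzero vectors in ℝ^n with mean μ = (1/N)·Σ ai. If g1 and g2 are independent uniformly distributed random vectors on G, then μᵀ·E[GC(g1, g2)] ≥ ‖μ‖², where GC(g1, g2) = g2 + g1 - ((g2ᵀ·g1)/‖g2‖²)·g2. -/
open scoped RealInnerProductSpace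

/-- For `g1, g2` independent and uniform on the finite set `G`, the expectation
`E[GC(g1, g2)]` is the double average `(1/N²) ∑_{a ∈ G} ∑_{b ∈ G} GC(a, b)`. -/
theorem stmt16 {n : ℕ} (G : Finset (EuclideanSpace ℝ (Fin n))) (hne : G.Nonempty)
    (hnz : ∀ a ∈ G, a ≠ 0)
    (μ : EuclideanSpace ℝ (Fin n)) (hμ : μ = (G.card : ℝ)⁻¹ • ∑ a ∈ G, a) :
    ‖μ‖ ^ 2 ≤ ⟪μ, ((G.card : ℝ) ^ 2)⁻¹ • ∑ a ∈ G, ∑ b ∈ G, GC a b⟫ := by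
  have hN : (0:ℝ) < (G.card : ℝ) := by exact_mod_cast hne.card_pos
  have hs : (∑ a ∈ G, a) = (G.card : ℝ) • μ := by
    rw [hμ, smul_smul, mul_inv_cancel₀ hN.ne', one_smul]
  -- per-term Cauchy-Schwarz bound
  have term : ∀ b ∈ G, ⟪μ, b⟫ ^ 2 / ‖b‖ ^ 2 ≤ ‖μ‖ ^ 2 := by
    intro b hb
    have hbn : ‖b‖ ≠ 0 := norm_ne_zero_iff.mpr (hnz b hb)
    have hb0 : (0:ℝ) < ‖b‖ ^ 2 := by positivity
    rw [div_le_iff₀ hb0]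
    have h := real_inner_mul_inner_self_le μ b
    rw [real_inner_self_eq_norm_sq, real_inner_self_eq_norm_sq] at h
    calc ⟪μ, b⟫ ^ 2 = ⟪μ, b⟫ * ⟪μ, b⟫ := sq ⟪μ, b⟫
      _ ≤ ‖μ‖ ^ 2 * ‖b‖ ^ 2 := h
  have expand : ⟪μ, ∑ a ∈ G, ∑ b ∈ G, GC a b⟫
      = ∑ a ∈ G, ∑ b ∈ G, (⟪μ, b⟫ + ⟪μ, a⟫ - ⟪b, a⟫ / ‖b‖ ^ 2 * ⟪μ, b⟫) := by
    rw [inner_sum]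
    refine Finset.sum_congr rfl fun a _ => ?_
    rw [inner_sum]
    refine Finset.sum_congr rfl fun b _ => ?_
    simp [GC, inner_sub_right, inner_add_right, inner_smul_right, real_inner_comm]
  have sum1 : ∑ a ∈ G, ∑ b ∈ G, ⟪μ, b⟫ = (G.card : ℝ) ^ 2 * ‖μ‖ ^ 2 := by
    rw [Finset.sum_const, ← inner_sum, hs, real_inner_smul_right,
      real_inner_self_eq_norm_sq]
    simp [mul_assoc]
    ring
  have sum2 : ∑ a ∈ G, ∑ b ∈ G, (⟪μ, a⟫ : ℝ) = (G.card : ℝ) ^ 2 * ‖μ‖ ^ 2 := by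
    rw [Finset.sum_comm]
    exact sum1
  have sum3 : ∑ a ∈ G, ∑ b ∈ G, ⟪b, a⟫ / ‖b‖ ^ 2 * ⟪μ, b⟫
      = (G.card : ℝ) * ∑ b ∈ G, ⟪μ, b⟫ ^ 2 / ‖b‖ ^ 2 := by
    rw [Finset.sum_comm, Finset.mul_sum]
    refine Finset.sum_congr rfl fun b hb => ?_
    have : ∑ a ∈ G, ⟪b, a⟫ / ‖b‖ ^ 2 * ⟪μ, b⟫
        = (⟪b, ∑ a ∈ G, a⟫) / ‖b‖ ^ 2 * ⟪μ, b⟫ := by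
      rw [inner_sum, Finset.sum_div, Finset.sum_mul]
    rw [this, hs, real_inner_smul_right, real_inner_comm b μ]
    ring
  have key : ⟪μ, ∑ a ∈ G, ∑ b ∈ G, GC a b⟫
      = 2 * (G.card : ℝ) ^ 2 * ‖μ‖ ^ 2
        - (G.card : ℝ) * ∑ b ∈ G, ⟪μ, b⟫ ^ 2 / ‖b‖ ^ 2 := by
    rw [expand]
    have : ∑ a ∈ G, ∑ b ∈ G, (⟪μ, b⟫ + ⟪μ, a⟫ - ⟪b, a⟫ / ‖b‖ ^ 2 * ⟪μ, b⟫)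
        = (∑ a ∈ G, ∑ b ∈ G, ⟪μ, b⟫) + (∑ a ∈ G, ∑ b ∈ G, (⟪μ, a⟫ : ℝ))
          - ∑ a ∈ G, ∑ b ∈ G, ⟪b, a⟫ / ‖b‖ ^ 2 * ⟪μ, b⟫ := by
      simp [Finset.sum_add_distrib, Finset.sum_sub_distrib]
    rw [this, sum1, sum2, sum3]
    ring
  have hbound : ∑ b ∈ G, ⟪μ, b⟫ ^ 2 / ‖b‖ ^ 2 ≤ (G.card : ℝ) * ‖μ‖ ^ 2 := by
    calc ∑ b ∈ G, ⟪μ, b⟫ ^ 2 / ‖b‖ ^ 2 ≤ ∑ b ∈ G, ‖μ‖ ^ 2 :=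
          Finset.sum_le_sum term
      _ = (G.card : ℝ) * ‖μ‖ ^ 2 := by rw [Finset.sum_const]; simp [mul_comm]
  rw [real_inner_smul_right, key]
  have hN2 : (0:ℝ) < (G.card : ℝ) ^ 2 := pow_pos hN 2
  rw [le_inv_mul_iff₀ hN2]
  nlinarith [hbound, hN, hN2]
end
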